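/- arXiv:2303.05435 — 5 statements merged into one kernel-verified Lean document; each statement's English description precedes it below -/
import Mathlib

section
/- Let G be a finite simple graph on vertex set V, let k ≥ 1, and let u₁, …, u_{4k} (in cyclic order) be the vertices of an induced cycle of G such that each of u₂, u₄, …, u_{4k} has degree exactly 2 in G. Define v ∈ {−1,0,1}^V by setting the coordinates indexed by u₂, u₆, …, u_{4k−2} to 1, the coordinates indexed by u₄, u₈, …, u_{4k} to −1, and all other coordinates to 0. Then v lies in the kernel of the real adjacency matrix A(G), i.e. A(G)·v = 0. -/
open Finset

lemma scv_val_add_mod4 {k : ℕ} [NeZero (4 * k)] (i j : ZMod (4 * k)) :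
    (i + j).val % 4 = (i.val + j.val) % 4 := by
  rw [ZMod.val_add, Nat.mod_mod_of_dvd _ ⟨k, rfl⟩]

/-- Alternating ±1 around a special cycle gives a kernel vector of the adjacency
matrix: if `u 0, u 1, …, u (4k−1)` (cyclically indexed by `ZMod (4k)`) are the
vertices of an induced cycle of `G` in which every vertex with odd index has degree
exactly 2 in `G`, then the vector assigning `1` to the vertices with index `≡ 1 mod 4`,
`−1` to the vertices with index `≡ 3 mod 4`, and `0` elsewhere, lies in the kernel of
the real adjacency matrix of `G`. (The vertices `u` with odd index are the paper's
`u₂, u₄, …, u_{4k}`; those with index `≡ 1 mod 4` are `u₂, u₆, …, u_{4k−2}` and those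
with index `≡ 3 mod 4` are `u₄, u₈, …, u_{4k}`.) -/
theorem special_cycle_kernel_vector {V : Type*} [Fintype V] [DecidableEq V]
    (G : SimpleGraph V) [DecidableRel G.Adj] (k : ℕ) (hk : 1 ≤ k) [NeZero (4 * k)]
    (u : ZMod (4 * k) → V) (hinj : Function.Injective u)
    (hadj : ∀ i, G.Adj (u i) (u (i + 1)))
    (hind : ∀ i j, G.Adj (u i) (u j) → j = i + 1 ∨ i = j + 1)
    (hdeg : ∀ i : ZMod (4 * k), Odd i.val → G.degree (u i) = 2) :
    (G.adjMatrix ℝ).mulVec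
      (fun x : V => ∑ i : ZMod (4 * k),
        if u i = x then
          (if i.val % 4 = 1 then (1 : ℝ) else if i.val % 4 = 3 then -1 else 0)
        else 0) = 0 := by
  haveI : Fact (1 < 4 * k) := ⟨by omega⟩
  have hval1 : (1 : ZMod (4 * k)).val = 1 := ZMod.val_one _
  have hne : ∀ j : ZMod (4 * k), j + 1 ≠ j - 1 := by
    intro j h
    have h2 : ((2 : ℕ) : ZMod (4 * k)) = 0 := by push_cast; linear_combination h
    have := (ZMod.natCast_eq_zero_iff 2 (4 * k)).mp h2
    have := Nat.le_of_dvd (by norm_num) this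
    omega
  funext y
  simp only [Matrix.mulVec, dotProduct, Pi.zero_apply, Finset.mul_sum]
  rw [Finset.sum_comm]
  have step : ∀ i : ZMod (4 * k), ∑ x : V, (G.adjMatrix ℝ) y x *
      (if u i = x then (if i.val % 4 = 1 then (1 : ℝ) else if i.val % 4 = 3 then -1 else 0)
        else 0)
      = (if G.Adj y (u i) then (1 : ℝ) else 0) *
          (if i.val % 4 = 1 then (1 : ℝ) else if i.val % 4 = 3 then -1 else 0) := by
    intro i
    rw [Finset.sum_eq_single (u i)]
    · simp [SimpleGraph.adjMatrix_apply]
    · intro x _ hx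
      rw [if_neg (Ne.symm hx), mul_zero]
    · intro h; exact absurd (Finset.mem_univ _) h
  simp only [step]
  by_cases hy : ∃ j, u j = y
  · obtain ⟨j, rfl⟩ := hy
    have hvan : ∀ i ∈ (univ : Finset (ZMod (4 * k))), i ∉ ({j + 1, j - 1} : Finset (ZMod (4 * k))) →
        (if G.Adj (u j) (u i) then (1 : ℝ) else 0) *
          (if i.val % 4 = 1 then (1 : ℝ) else if i.val % 4 = 3 then -1 else 0) = 0 := by
      intro i _ hi
      simp only [Finset.mem_insert, Finset.mem_singleton, not_or] at hi
      by_cases ha : G.Adj (u j) (u i)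
      · rcases hind j i ha with h | h
        · exact absurd h hi.1
        · exact absurd (eq_sub_of_add_eq h.symm) hi.2
      · simp [ha]
    rw [← Finset.sum_subset (Finset.subset_univ _) hvan, Finset.sum_pair (hne j)]
    have ha1 : G.Adj (u j) (u (j + 1)) := hadj j
    have ha2 : G.Adj (u j) (u (j - 1)) := by
      have := hadj (j - 1); rw [sub_add_cancel] at this; exact this.symm
    rw [if_pos ha1, if_pos ha2, one_mul, one_mul]
    have e1 : (j + 1).val % 4 = (j.val + 1) % 4 := by rw [scv_val_add_mod4, hval1]
    have e2 : ((j - 1).val + 1) % 4 = j.val % 4 := by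
      have := scv_val_add_mod4 (j - 1) (1 : ZMod (4 * k))
      rw [sub_add_cancel, hval1] at this
      omega
    split_ifs <;> try norm_num
    all_goals omega
  · push_neg at hy
    refine Finset.sum_eq_zero fun i _ => ?_
    by_cases ha : G.Adj y (u i)
    · rw [if_pos ha, one_mul]
      have hodd : ¬ Odd i.val := by
        intro hodd
        have hd := hdeg i hodd
        have hsub : ({u (i + 1), u (i - 1), y} : Finset V) ⊆ G.neighborFinset (u i) := by
          intro x hx
          simp only [Finset.mem_insert, Finset.mem_singleton] at hx
          rw [SimpleGraph.mem_neighborFinset]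
          rcases hx with rfl | rfl | rfl
          · exact hadj i
          · have := hadj (i - 1); rw [sub_add_cancel] at this; exact this.symm
          · exact ha.symm
        have hcard : ({u (i + 1), u (i - 1), y} : Finset V).card = 3 := by
          rw [Finset.card_insert_of_notMem, Finset.card_insert_of_notMem,
            Finset.card_singleton]
          · simp [hy (i - 1)]
          · simp only [Finset.mem_insert, Finset.mem_singleton, not_or]
            exact ⟨fun h => hne i (hinj h), hy (i + 1)⟩
        have := Finset.card_le_card hsub
        rw [hcard] at this
        rw [SimpleGraph.degree] at hd
        omega
      rw [Nat.odd_iff] at hodd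
      split_ifs with h1 h2 <;> first | rfl | (exfalso; omega)
    · simp [ha]
end

section
/- Let G be a finite simple graph, let v be a vertex of G of degree 1 with unique neighbour w, and let G′ = G − {v, w} be the induced subgraph obtained by deleting v and w. Then rank A(G′) = rank A(G) − 2, where A denotes the real adjacency matrix and rank is over ℝ. Moreover σ(G′) = σ(G) − 2, where σ(H) denotes the maximum total number of vertices covered by a collection of pairwise vertex-disjoint subgraphs of H each of which is a cycle or a single edge. -/
open scoped Classical
open Finset

/-- `σ(G)`: the maximum total number of vertices covered by a collection of pairwise
vertex-disjoint subgraphs of `G`, each of which is a single edge (a vertex set `{u,v}`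
with `u,v` adjacent) or a cycle (a vertex set `C` with `|C| ≥ 3` carrying a cyclic
ordering, given by a permutation acting as a single cycle on `C`, in which consecutive
vertices are adjacent). -/
noncomputable def sigmaNum {V : Type*} [Fintype V] [DecidableEq V] (G : SimpleGraph V) : ℕ :=
  sSup {k | ∃ 𝒞 : Finset (Finset V),
    (↑𝒞 : Set (Finset V)).Pairwise (fun C D => Disjoint C D) ∧
    (∀ C ∈ 𝒞, (∃ u v, G.Adj u v ∧ C = {u, v}) ∨
      (3 ≤ C.card ∧ ∃ π : Equiv.Perm V, π.IsCycleOn ↑C ∧ ∀ v ∈ C, G.Adj v (π v))) ∧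
    ∑ C ∈ 𝒞, C.card = k}


section Aux
open Matrix

lemma range_prodMap' {R M N M' N' : Type*} [CommRing R] [AddCommGroup M] [AddCommGroup N]
    [AddCommGroup M'] [AddCommGroup N'] [Module R M] [Module R N] [Module R M'] [Module R N']
    (f : M →ₗ[R] M') (g : N →ₗ[R] N') :
    LinearMap.range (f.prodMap g) = (LinearMap.range f).prod (LinearMap.range g) := by
  ext ⟨a, b⟩
  simp only [LinearMap.mem_range, Submodule.mem_prod, Prod.ext_iff]
  constructor
  · rintro ⟨⟨x, y⟩, hx, hy⟩; exact ⟨⟨x, hx⟩, ⟨y, hy⟩⟩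
  · rintro ⟨⟨x, hx⟩, ⟨y, hy⟩⟩; exact ⟨(x, y), hx, hy⟩

lemma finrank_submodule_prod {R M N : Type*} [Field R] [AddCommGroup M] [AddCommGroup N]
    [Module R M] [Module R N] (p : Submodule R M) (q : Submodule R N)
    [FiniteDimensional R p] [FiniteDimensional R q] :
    Module.finrank R (p.prod q) = Module.finrank R p + Module.finrank R q := by
  have hinj : Function.Injective (p.subtype.prodMap q.subtype) := by
    rintro ⟨⟨a, _⟩, ⟨b, _⟩⟩ ⟨⟨c, _⟩, ⟨d, _⟩⟩ h
    simp_all [Prod.ext_iff, LinearMap.prodMap_apply, Subtype.ext_iff]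
  have hr : LinearMap.range (p.subtype.prodMap q.subtype) = p.prod q := by
    rw [range_prodMap']; simp
  have := LinearMap.finrank_range_of_inj hinj
  rw [hr] at this
  rw [this, Module.finrank_prod]

lemma rank_fromBlocks_diag {m n : Type*} [Fintype m] [Fintype n] [DecidableEq m] [DecidableEq n]
    (A : Matrix m m ℝ) (D : Matrix n n ℝ) :
    (Matrix.fromBlocks A 0 0 D).rank = A.rank + D.rank := by
  classical
  set e := (LinearEquiv.sumArrowLequivProdArrow m n ℝ ℝ)
  have key : (Matrix.fromBlocks A 0 0 D).mulVecLin
      = (e.symm.toLinearMap).comp ((A.mulVecLin.prodMap D.mulVecLin).comp e.toLinearMap) := by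
    apply LinearMap.ext; intro x
    ext i
    cases i with
    | inl i =>
      simp [Matrix.mulVecLin_apply, Matrix.mulVec, dotProduct, e,
        Fintype.sum_sum_type, LinearEquiv.sumArrowLequivProdArrow]
    | inr i =>
      simp [Matrix.mulVecLin_apply, Matrix.mulVec, dotProduct, e,
        Fintype.sum_sum_type, LinearEquiv.sumArrowLequivProdArrow]
  rw [Matrix.rank, key]
  rw [LinearMap.range_comp, LinearMap.range_comp, LinearEquiv.range]
  rw [Submodule.map_top]
  rw [LinearEquiv.finrank_map_eq, range_prodMap', finrank_submodule_prod]
  rfl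

end Aux

section Aux2
open Matrix


section RankPart
variable {V : Type*} [Fintype V] [DecidableEq V] (G : SimpleGraph V) (v w : V)

lemma adj_leaf_iff (hdeg : G.degree v = 1) (hadj : G.Adj v w) :
    ∀ u, G.Adj v u ↔ u = w := by
  intro u
  have h1 : G.neighborFinset v = {w} := by
    apply Finset.eq_singleton_iff_unique_mem.2
    refine ⟨by simpa using hadj, ?_⟩
    intro x hx
    by_contra hxw
    have : ({w, x} : Finset V) ⊆ G.neighborFinset v := by
      intro y hy
      simp only [Finset.mem_insert, Finset.mem_singleton] at hy
      rcases hy with rfl | rfl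
      · simpa using hadj
      · exact hx
    have h2 := Finset.card_le_card this
    rw [Finset.card_pair (fun h => hxw h.symm)] at h2
    rw [SimpleGraph.card_neighborFinset_eq_degree, hdeg] at h2
    omega
  constructor
  · intro h
    have : u ∈ G.neighborFinset v := by simpa using h
    rw [h1] at this; simpa using this
  · rintro rfl; exact hadj

lemma rank_leaf (hdeg : G.degree v = 1) (hadj : G.Adj v w) :
    ((G.induce ({v, w}ᶜ : Set V)).adjMatrix ℝ).rank + 2 = (G.adjMatrix ℝ).rank := by
  have hvw : v ≠ w := G.ne_of_adj hadj
  have hN := adj_leaf_iff G v w hdeg hadj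
  set A : Matrix V V ℝ := G.adjMatrix ℝ with hA
  have hAv : ∀ u, A v u = if u = w then 1 else 0 := by
    intro u
    simp only [hA, SimpleGraph.adjMatrix_apply]
    by_cases h : u = w
    · subst h; simp [hadj]
    · simp only [if_neg h, ite_eq_right_iff]
      intro hc; exact absurd ((hN u).1 hc) h
  have hAsymm : ∀ a b, A a b = A b a := fun a b => by
    simp [hA, SimpleGraph.adjMatrix_apply, G.adj_comm]
  set c : V → ℝ := fun u => if u = v then 0 else A u w with hc
  set N : Matrix V V ℝ := Matrix.of (fun u u' => c u * (if u' = v then 1 else 0)) with hNm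
  set M : Matrix V V ℝ := Matrix.of (fun u u' => (if u = v then 1 else 0) * c u') with hMm
  have hcv : c v = 0 := by simp [hc]
  have hcw : c w = 0 := by simp [hc, hvw.symm, hA]
  have hNN : N * N = 0 := by
    ext u u'
    simp only [Matrix.mul_apply, hNm, Matrix.of_apply, Matrix.zero_apply]
    rw [Finset.sum_eq_single v]
    · simp [hcv]
    · intro b _ hb; simp [hb]
    · simp
  have hMM : M * M = 0 := by
    ext u u'
    simp only [Matrix.mul_apply, hMm, Matrix.of_apply, Matrix.zero_apply]
    rw [Finset.sum_eq_single v]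
    · simp [hcv]
    · intro b _ hb; simp [hb]
    · simp
  have hPunit : IsUnit (1 - N).det := by
    have : (1 - N) * (1 + N) = 1 := by
      have h1 : (1 - N) * (1 + N) = 1 - N * N := by noncomm_ring
      rw [h1, hNN, sub_zero]
    exact Matrix.isUnit_det_of_right_inverse this
  have hQunit : IsUnit (1 - M).det := by
    have : (1 - M) * (1 + M) = 1 := by
      have h1 : (1 - M) * (1 + M) = 1 - M * M := by noncomm_ring
      rw [h1, hMM, sub_zero]
    exact Matrix.isUnit_det_of_right_inverse this
  set B : Matrix V V ℝ := (1 - N) * A * (1 - M) with hB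
  have hrankB : B.rank = A.rank := by
    rw [hB, Matrix.rank_mul_eq_left_of_isUnit_det _ _ hQunit,
      Matrix.rank_mul_eq_right_of_isUnit_det _ _ hPunit]
  have hBentry : ∀ u u', B u u' = A u u' - c u * A v u' - A u v * c u' := by
    intro u u'
    have hNA : (N * A) u u' = c u * A v u' := by
      rw [Matrix.mul_apply, Finset.sum_eq_single v]
      · simp [hNm]
      · intro b _ hb; simp [hNm, hb]
      · simp
    have hAM : (A * M) u u' = A u v * c u' := by
      rw [Matrix.mul_apply, Finset.sum_eq_single v]
      · simp [hMm]
      · intro b _ hb; simp [hMm, hb]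
      · simp
    have hNAM : (N * (A * M)) u u' = 0 := by
      rw [Matrix.mul_apply, Finset.sum_eq_single v]
      · have : (A * M) v u' = A v v * c u' := by
          rw [Matrix.mul_apply, Finset.sum_eq_single v]
          · simp [hMm]
          · intro b _ hb; simp [hMm, hb]
          · simp
        rw [this]; simp [hA]
      · intro b _ hb; simp [hNm, hb]
      · simp
    have : B = A - N * A - A * M + N * (A * M) := by
      rw [hB]; noncomm_ring
    rw [this]
    simp [Matrix.sub_apply, Matrix.add_apply, hNA, hAM, hNAM]
  -- block decomposition
  set s : Set V := {v, w} with hs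
  have hv : v ∈ s := by simp [hs]
  have hw : w ∈ s := by simp [hs]
  set e : ↥s ⊕ ↥(sᶜ) ≃ V := (Equiv.Set.sumCompl s) with he
  set X : Matrix ↥s ↥s ℝ := Matrix.of (fun i j => if (i : V) = (j : V) then 0 else 1) with hX
  set A' : Matrix ↥(sᶜ) ↥(sᶜ) ℝ := (G.induce (sᶜ)).adjMatrix ℝ with hA'
  have hAvv : A v v = 0 := by simp [hA]
  have hAww : A w w = 0 := by simp [hA]
  have hAvw : A v w = 1 := by rw [hAv w]; simp
  have hmem : ∀ x : V, x ∈ s ↔ x = v ∨ x = w := by intro x; simp [hs]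
  have hBsub : B.submatrix e e = Matrix.fromBlocks X 0 0 A' := by
    ext i j
    cases i with
    | inl a =>
      cases j with
      | inl b =>
        simp only [Matrix.submatrix_apply, he, Equiv.Set.sumCompl_apply_inl,
          Matrix.fromBlocks_apply₁₁, hBentry]
        rcases (hmem a).1 a.2 with ha | ha <;> rcases (hmem b).1 b.2 with hb | hb <;>
          simp [hX, ha, hb, hAvv, hAww, hAvw, hcv, hcw, hvw, hvw.symm, hAsymm w v]
      | inr b =>
        have hbv : (b : V) ≠ v := fun h => b.2 ((hmem b).2 (Or.inl h))
        have hbw : (b : V) ≠ w := fun h => b.2 ((hmem b).2 (Or.inr h))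
        simp only [Matrix.submatrix_apply, he, Equiv.Set.sumCompl_apply_inl,
          Equiv.Set.sumCompl_apply_inr, Matrix.fromBlocks_apply₁₂, Matrix.zero_apply, hBentry]
        rcases (hmem a).1 a.2 with ha | ha
        · rw [ha, hcv, hAvv, hAv b]
          simp [hbw]
        · rw [ha, hcw]
          have : c (b : V) = A w (b : V) := by
            rw [hc]; simp only [if_neg hbv]; exact hAsymm b w
          rw [this, hAsymm w v, hAvw]
          ring
    | inr a =>
      have hav : (a : V) ≠ v := fun h => a.2 ((hmem a).2 (Or.inl h))
      have haw : (a : V) ≠ w := fun h => a.2 ((hmem a).2 (Or.inr h))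
      have hca : c (a : V) = A w (a : V) := by
        rw [hc]; simp only [if_neg hav]; exact hAsymm a w
      cases j with
      | inl b =>
        simp only [Matrix.submatrix_apply, he, Equiv.Set.sumCompl_apply_inl,
          Equiv.Set.sumCompl_apply_inr, Matrix.fromBlocks_apply₂₁, Matrix.zero_apply, hBentry]
        rcases (hmem b).1 b.2 with hb | hb
        · rw [hb, hcv, hAvv]
          have : A (a : V) v = 0 := by rw [hAsymm, hAv a]; simp [haw]
          rw [this]
          ring
        · rw [hb, hcw]
          have h1 : A v w = 1 := hAvw
          have h2 : A (a : V) v = 0 := by rw [hAsymm, hAv a]; simp [haw]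
          rw [h1, h2, hca, hAsymm a w]
          ring
      | inr b =>
        have hbv : (b : V) ≠ v := fun h => b.2 ((hmem b).2 (Or.inl h))
        have hbw : (b : V) ≠ w := fun h => b.2 ((hmem b).2 (Or.inr h))
        simp only [Matrix.submatrix_apply, he, Equiv.Set.sumCompl_apply_inr,
          Matrix.fromBlocks_apply₂₂, hBentry]
        have h1 : A v (b : V) = 0 := by rw [hAv b]; simp [hbw]
        have h2 : A (a : V) v = 0 := by rw [hAsymm, hAv a]; simp [haw]
        rw [h1, h2]
        have : A (a : V) (b : V) = A' a b := by
          simp [hA, hA', SimpleGraph.adjMatrix_apply, SimpleGraph.comap_adj]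
        rw [this]; ring
  -- rank of X
  have hrankX : X.rank = 2 := by
    let f : Fin 2 ≃ ↥s :=
      { toFun := ![⟨v, hv⟩, ⟨w, hw⟩]
        invFun := fun x => if (x : V) = v then 0 else 1
        left_inv := by intro i; fin_cases i <;> simp [hvw.symm]
        right_inv := by
          rintro ⟨x, hx⟩
          rcases (hmem x).1 hx with rfl | rfl
          · simp
          · simp [hvw.symm] }
    have hXf : X.submatrix f f = !![(0:ℝ), 1; 1, 0] := by
      ext i j
      fin_cases i <;> fin_cases j <;> simp [hX, f, hvw, hvw.symm]
    have h1 : (X.submatrix f f).rank = X.rank := Matrix.rank_submatrix X f f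
    have h2 : IsUnit (X.submatrix f f) := by
      rw [Matrix.isUnit_iff_isUnit_det, hXf]
      simp [Matrix.det_fin_two_of]
    have h3 := Matrix.rank_of_isUnit _ h2
    rw [h1] at h3
    simpa using h3
  have hrs : (B.submatrix e e).rank = B.rank := Matrix.rank_submatrix B e e
  rw [hBsub, rank_fromBlocks_diag, hrankX] at hrs
  rw [← hrankB, ← hrs, hA']
  omega
end RankPart

end Aux2

section Aux3

variable {V : Type*} [Fintype V] [DecidableEq V]

def goodColl (G : SimpleGraph V) (𝒞 : Finset (Finset V)) : Prop :=
  (↑𝒞 : Set (Finset V)).Pairwise (fun C D => Disjoint C D) ∧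
  (∀ C ∈ 𝒞, (∃ u v, G.Adj u v ∧ C = {u, v}) ∨
    (3 ≤ C.card ∧ ∃ π : Equiv.Perm V, π.IsCycleOn ↑C ∧ ∀ v ∈ C, G.Adj v (π v)))

noncomputable def sigmaNum' (G : SimpleGraph V) : ℕ :=
  sSup {k | ∃ 𝒞 : Finset (Finset V), goodColl G 𝒞 ∧ ∑ C ∈ 𝒞, C.card = k}

lemma sigma_set_bdd (G : SimpleGraph V) :
    ∀ k ∈ {k | ∃ 𝒞 : Finset (Finset V), goodColl G 𝒞 ∧ ∑ C ∈ 𝒞, C.card = k},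
      k ≤ Fintype.card V := by
  rintro k ⟨𝒞, ⟨hdisj, -⟩, rfl⟩
  have h1 : (𝒞.biUnion id).card = ∑ C ∈ 𝒞, C.card :=
    Finset.card_biUnion (fun x hx y hy hxy => hdisj hx hy hxy)
  rw [← h1]
  exact Finset.card_le_card (Finset.subset_univ _) |>.trans (le_of_eq (Finset.card_univ))

lemma exists_optimal (G : SimpleGraph V) :
    ∃ 𝒞 : Finset (Finset V), goodColl G 𝒞 ∧ ∑ C ∈ 𝒞, C.card = sigmaNum' G := by
  have hne : {k | ∃ 𝒞 : Finset (Finset V), goodColl G 𝒞 ∧ ∑ C ∈ 𝒞, C.card = k}.Nonempty :=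
    ⟨0, ∅, ⟨by simp [goodColl], by simp [goodColl]⟩, by simp⟩
  have hbdd : BddAbove {k | ∃ 𝒞 : Finset (Finset V), goodColl G 𝒞 ∧ ∑ C ∈ 𝒞, C.card = k} :=
    ⟨Fintype.card V, fun k hk => sigma_set_bdd G k hk⟩
  exact Nat.sSup_mem hne hbdd

lemma le_sigmaNum' (G : SimpleGraph V) (𝒞 : Finset (Finset V)) (h : goodColl G 𝒞) :
    ∑ C ∈ 𝒞, C.card ≤ sigmaNum' G := by
  apply le_csSup ⟨Fintype.card V, fun k hk => sigma_set_bdd G k hk⟩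
  exact ⟨𝒞, h, rfl⟩

def permDown (s : Set V) (C : Finset V) (π : Equiv.Perm V)
    (hCs : ∀ x ∈ C, x ∈ s) (hm : ∀ x ∈ C, π x ∈ C) (hm' : ∀ x ∈ C, π⁻¹ x ∈ C) :
    Equiv.Perm s where
  toFun := fun x => if h : (x : V) ∈ C then ⟨π x, hCs _ (hm _ h)⟩ else x
  invFun := fun y => if h : (y : V) ∈ C then ⟨π⁻¹ y, hCs _ (hm' _ h)⟩ else y
  left_inv := by
    rintro ⟨x, hx⟩
    by_cases h : x ∈ C
    · simp only [dif_pos h, dif_pos (hm _ h)]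
      apply Subtype.ext; simp
    · simp only [dif_neg h, dif_neg h]
  right_inv := by
    rintro ⟨x, hx⟩
    by_cases h : x ∈ C
    · simp only [dif_pos h, dif_pos (hm' _ h)]
      apply Subtype.ext; simp
    · simp only [dif_neg h, dif_neg h]

lemma permDown_apply (s : Set V) (C : Finset V) (π : Equiv.Perm V)
    (hCs : ∀ x ∈ C, x ∈ s) (hm : ∀ x ∈ C, π x ∈ C) (hm' : ∀ x ∈ C, π⁻¹ x ∈ C)
    (x : s) (h : (x : V) ∈ C) :
    ((permDown s C π hCs hm hm' x : s) : V) = π (x : V) := by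
  simp [permDown, dif_pos h]

lemma pow_mem_of_mem (C : Finset V) (π : Equiv.Perm V) (hm : ∀ x ∈ C, π x ∈ C)
    (k : ℕ) (x : V) (hx : x ∈ C) : (π ^ k) x ∈ C := by
  induction k with
  | zero => simpa
  | succ k ih => rw [pow_succ']; simpa using hm _ ih

lemma permDown_pow (s : Set V) (C : Finset V) (π : Equiv.Perm V)
    (hCs : ∀ x ∈ C, x ∈ s) (hm : ∀ x ∈ C, π x ∈ C) (hm' : ∀ x ∈ C, π⁻¹ x ∈ C)
    (k : ℕ) (x : s) (hx : (x : V) ∈ C) :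
    (((permDown s C π hCs hm hm') ^ k) x : V) = (π ^ k) (x : V) := by
  induction k with
  | zero => simp
  | succ k ih =>
    rw [pow_succ', pow_succ']
    simp only [Equiv.Perm.mul_apply]
    rw [permDown_apply s C π hCs hm hm' _ (by rw [ih]; exact pow_mem_of_mem C π hm k _ hx), ih]

lemma cycle_down (G : SimpleGraph V) (s : Set V) (C : Finset V) (hCs : ∀ x ∈ C, x ∈ s)
    (π : Equiv.Perm V) (hcyc : π.IsCycleOn ↑C) (hadjC : ∀ x ∈ C, G.Adj x (π x)) :
    ∃ π' : Equiv.Perm s, π'.IsCycleOn ↑(C.subtype (· ∈ s)) ∧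
      ∀ y ∈ C.subtype (· ∈ s), (G.induce s).Adj y (π' y) := by
  have hm : ∀ x ∈ C, π x ∈ C := fun x hx => hcyc.1.mapsTo hx
  have hm' : ∀ x ∈ C, π⁻¹ x ∈ C := by
    intro x hx
    obtain ⟨y, hy, hyx⟩ := hcyc.1.surjOn hx
    rw [← hyx]; simpa using hy
  set π' := permDown s C π hCs hm hm' with hπ'
  have happ : ∀ (x : s), (x : V) ∈ C → ((π' x : s) : V) = π (x : V) :=
    fun x h => permDown_apply s C π hCs hm hm' x h
  have hsubmem : ∀ y : s, y ∈ C.subtype (· ∈ s) ↔ (y : V) ∈ C := by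
    intro y; simp [Finset.mem_subtype]
  refine ⟨π', ⟨⟨?_, ?_, ?_⟩, ?_⟩, ?_⟩
  · intro x hxC
    have hx : (x : V) ∈ C := by simpa using hxC
    have hmem : ((π' x : s) : V) ∈ C := by rw [happ x hx]; exact hm _ hx
    simpa [Finset.mem_coe, Finset.mem_subtype] using hmem
  · intro a _ b _ hab
    exact Equiv.injective _ hab
  · intro y hyC
    have hy : (y : V) ∈ C := by simpa using hyC
    refine ⟨⟨π⁻¹ y, hCs _ (hm' _ hy)⟩, by simpa using hm' _ hy, ?_⟩
    have := happ ⟨π⁻¹ (y : V), hCs _ (hm' _ hy)⟩ (hm' _ hy)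
    apply Subtype.ext
    rw [this]
    simp
  · intro x hxC y hyC
    have hx : (x : V) ∈ C := by simpa using hxC
    have hy : (y : V) ∈ C := by simpa using hyC
    obtain ⟨n, -, hn⟩ := hcyc.exists_pow_eq hx hy
    refine ⟨(n : ℤ), ?_⟩
    rw [zpow_natCast]
    apply Subtype.ext
    rw [permDown_pow s C π hCs hm hm' n x hx]
    exact hn
  · intro y hyC
    have hy : (y : V) ∈ C := by simpa using hyC
    have : ((π' y : s) : V) = π (y : V) := happ y hy
    have hGadj : G.Adj (y : V) ((π' y : s) : V) := by rw [this]; exact hadjC _ hy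
    exact hGadj

set_option linter.unusedSectionVars false

lemma cycle_up (G : SimpleGraph V) (s : Set V) (C' : Finset s)
    (π' : Equiv.Perm s) (hcyc : π'.IsCycleOn ↑C')
    (hadjC : ∀ y ∈ C', (G.induce s).Adj y (π' y)) :
    ∃ π : Equiv.Perm V, π.IsCycleOn ↑(C'.image (Subtype.val)) ∧
      ∀ x ∈ C'.image (Subtype.val), G.Adj x (π x) := by
  have hp : DecidablePred (· ∈ s) := Classical.decPred _
  set f : s ≃ Subtype (· ∈ s) := Equiv.refl _ with hf
  set π : Equiv.Perm V := π'.extendDomain f with hπ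
  have happ : ∀ y : s, π (y : V) = (π' y : V) := by
    intro y
    rw [hπ, Equiv.Perm.extendDomain_apply_subtype _ f y.2]
    rfl
  refine ⟨π, ?_, ?_⟩
  · have h := hcyc.extendDomain f
    have himg : ((fun a => (f a : V)) '' (↑C' : Set s)) = ((C'.image Subtype.val : Finset V) : Set V) := by
      rw [Finset.coe_image]
      ext x
      simp [hf]
    rw [show ((↑) ∘ f : s → V) = (fun a => (f a : V)) from rfl] at h
    rwa [himg] at h
  · intro x hx
    simp only [Finset.mem_image] at hx
    obtain ⟨y, hy, rfl⟩ := hx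
    rw [happ y]
    exact hadjC y hy

lemma subtype_card_eq (C : Finset V) (s : Set V) (h : ∀ x ∈ C, x ∈ s) :
    (C.subtype (· ∈ s)).card = C.card := by
  rw [Finset.card_subtype, Finset.filter_true_of_mem h]

lemma subtype_inj_on (s : Set V) (C D : Finset V) (hC : ∀ x ∈ C, x ∈ s) (hD : ∀ x ∈ D, x ∈ s)
    (h : C.subtype (· ∈ s) = D.subtype (· ∈ s)) : C = D := by
  have h1 := congrArg (fun t => t.map (Function.Embedding.subtype (· ∈ s))) h
  simpa [Finset.subtype_map, Finset.filter_true_of_mem hC, Finset.filter_true_of_mem hD] using h1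

lemma coll_down (G : SimpleGraph V) (s : Set V) (𝒞 : Finset (Finset V))
    (hgood : goodColl G 𝒞) (hsub : ∀ C ∈ 𝒞, ∀ x ∈ C, x ∈ s) :
    ∃ 𝒞' : Finset (Finset s), goodColl (G.induce s) 𝒞' ∧
      ∑ C ∈ 𝒞', C.card = ∑ C ∈ 𝒞, C.card := by
  obtain ⟨hdisj, hpieces⟩ := hgood
  refine ⟨𝒞.image (fun C => C.subtype (· ∈ s)), ⟨?_, ?_⟩, ?_⟩
  · rintro C' hC' D' hD' hne
    simp only [Finset.coe_image, Set.mem_image, Finset.mem_coe] at hC' hD'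
    obtain ⟨C, hC, rfl⟩ := hC'
    obtain ⟨D, hD, rfl⟩ := hD'
    have hCD : C ≠ D := fun h => hne (by rw [h])
    have hdis : Disjoint C D := hdisj (Finset.mem_coe.2 hC) (Finset.mem_coe.2 hD) hCD
    rw [Finset.disjoint_left] at hdis ⊢
    intro a ha ha'
    rw [Finset.mem_subtype] at ha ha'
    exact hdis ha ha'
  · intro C' hC'
    simp only [Finset.mem_image] at hC'
    obtain ⟨C, hC, rfl⟩ := hC'
    rcases hpieces C hC with ⟨u, u', huu', rfl⟩ | ⟨hcard, π, hcyc, hadjC⟩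
    · left
      have hu : u ∈ s := hsub _ hC u (by simp)
      have hu' : u' ∈ s := hsub _ hC u' (by simp)
      refine ⟨⟨u, hu⟩, ⟨u', hu'⟩, ?_, ?_⟩
      · exact huu'
      · ext y
        simp only [Finset.mem_subtype, Finset.mem_insert, Finset.mem_singleton]
        constructor
        · intro h
          rcases h with h | h
          · left; exact Subtype.ext h
          · right; exact Subtype.ext h
        · intro h
          rcases h with rfl | rfl
          · left; rfl
          · right; rfl
    · right
      obtain ⟨π', hcyc', hadj'⟩ := cycle_down G s C (hsub _ hC) π hcyc hadjC
      exact ⟨by rw [subtype_card_eq C s (hsub _ hC)]; exact hcard, π', hcyc', hadj'⟩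
  · rw [Finset.sum_image]
    · exact Finset.sum_congr rfl (fun C hC => subtype_card_eq C s (hsub _ hC))
    · intro C hC D hD h
      exact subtype_inj_on s C D (hsub _ hC) (hsub _ hD) h

lemma coll_up (G : SimpleGraph V) (s : Set V) (𝒞' : Finset (Finset s))
    (hgood : goodColl (G.induce s) 𝒞') :
    ∃ 𝒞 : Finset (Finset V), goodColl G 𝒞 ∧ (∀ C ∈ 𝒞, ∀ x ∈ C, x ∈ s) ∧
      ∑ C ∈ 𝒞, C.card = ∑ C ∈ 𝒞', C.card := by
  obtain ⟨hdisj, hpieces⟩ := hgood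
  have hinj : Function.Injective (fun C' : Finset s => C'.image Subtype.val) :=
    fun C D h => Finset.image_injective Subtype.coe_injective h
  refine ⟨𝒞'.image (fun C' => C'.image Subtype.val), ⟨?_, ?_⟩, ?_, ?_⟩
  · rintro C hC D hD hne
    simp only [Finset.coe_image, Set.mem_image, Finset.mem_coe] at hC hD
    obtain ⟨C', hC', rfl⟩ := hC
    obtain ⟨D', hD', rfl⟩ := hD
    have hCD : C' ≠ D' := fun h => hne (by rw [h])
    have hdis : Disjoint C' D' := hdisj (Finset.mem_coe.2 hC') (Finset.mem_coe.2 hD') hCD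
    rwa [Finset.disjoint_image Subtype.coe_injective]
  · intro C hC
    simp only [Finset.mem_image] at hC
    obtain ⟨C', hC', rfl⟩ := hC
    rcases hpieces C' hC' with ⟨u, u', huu', rfl⟩ | ⟨hcard, π', hcyc, hadjC⟩
    · left
      exact ⟨u, u', huu', by simp [Finset.image_insert]⟩
    · right
      obtain ⟨π, hcyc', hadj'⟩ := cycle_up G s C' π' hcyc hadjC
      refine ⟨?_, π, hcyc', hadj'⟩
      rw [Finset.card_image_of_injective _ Subtype.coe_injective]
      exact hcard
  · intro C hC x hx
    simp only [Finset.mem_image] at hC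
    obtain ⟨C', hC', rfl⟩ := hC
    simp only [Finset.mem_image] at hx
    obtain ⟨y, hy, rfl⟩ := hx
    exact y.2
  · rw [Finset.sum_image (fun C hC D hD h => hinj h)]
    exact Finset.sum_congr rfl
      (fun C hC => Finset.card_image_of_injective _ Subtype.coe_injective)

lemma leaf_piece (G : SimpleGraph V) (v w : V) (hN : ∀ u, G.Adj v u ↔ u = w)
    (C : Finset V)
    (hpiece : (∃ u u', G.Adj u u' ∧ C = {u, u'}) ∨
      (3 ≤ C.card ∧ ∃ π : Equiv.Perm V, π.IsCycleOn ↑C ∧ ∀ x ∈ C, G.Adj x (π x)))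
    (hvC : v ∈ C) : C = {v, w} := by
  rcases hpiece with ⟨u, u', huu', rfl⟩ | ⟨hcard, π, hcyc, hadjC⟩
  · simp only [Finset.mem_insert, Finset.mem_singleton] at hvC
    rcases hvC with rfl | rfl
    · rw [(hN u').1 huu']
    · rw [(hN u).1 (G.adj_comm _ _ |>.1 huu')]
      exact Finset.pair_comm w v
  · exfalso
    have hπv : π v = w := (hN _).1 (hadjC v hvC)
    have hwC : w ∈ C := by rw [← hπv]; exact hcyc.1.mapsTo hvC
    have hπw : π w = v := by
      obtain ⟨y, hy, hyv⟩ := hcyc.1.surjOn (Finset.mem_coe.2 hvC)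
      have ha : G.Adj y v := by rw [← hyv]; exact hadjC y hy
      have hyw : y = w := (hN y).1 (G.adj_comm _ _ |>.1 ha)
      rw [← hyw]; exact hyv
    have hπ2v : (π ^ 2) v = v := by
      rw [pow_two]; simp [Equiv.Perm.mul_apply, hπv, hπw]
    have hπ2w : (π ^ 2) w = w := by
      rw [pow_two]; simp [Equiv.Perm.mul_apply, hπv, hπw]
    have hvw : v ≠ w := G.ne_of_adj (by rw [← hπv]; exact hadjC v hvC)
    have hthird : ∃ x ∈ C, x ≠ v ∧ x ≠ w := by
      by_contra hcon
      push_neg at hcon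
      have hsub : C ⊆ {v, w} := by
        intro x hx
        rcases Classical.em (x = v) with rfl | hxv
        · simp
        · simp [hcon x hx hxv]
      have := Finset.card_le_card hsub
      have h2 : ({v, w} : Finset V).card ≤ 2 := Finset.card_insert_le _ _ |>.trans (by simp)
      omega
    obtain ⟨x, hxC, hxv, hxw⟩ := hthird
    obtain ⟨n, hn⟩ := hcyc.2 (Finset.mem_coe.2 hvC) (Finset.mem_coe.2 hxC)
    have h2n : π ^ (2:ℤ) = π ^ (2:ℕ) := by
      exact_mod_cast zpow_natCast π 2
    have heven : ∀ q : ℤ, (π ^ (2 * q)) v = v ∧ (π ^ (2 * q)) w = w := by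
      intro q
      have h1 : π ^ (2 * q : ℤ) = (π ^ (2:ℤ)) ^ q := zpow_mul π 2 q
      rw [h1, h2n]
      exact ⟨Equiv.Perm.zpow_apply_eq_self_of_apply_eq_self hπ2v q,
        Equiv.Perm.zpow_apply_eq_self_of_apply_eq_self hπ2w q⟩
    have hkey : ∀ m : ℤ, (π ^ m) v = v ∨ (π ^ m) v = w := by
      intro m
      rcases Int.even_or_odd m with ⟨q, hq⟩ | ⟨q, hq⟩
      · left
        rw [hq, show q + q = 2 * q by ring]
        exact (heven q).1
      · right
        rw [hq]
        have : (π ^ (2 * q + 1 : ℤ)) v = (π ^ (2 * q : ℤ)) (π v) := by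
          rw [zpow_add, zpow_one]; rfl
        rw [this, hπv]
        exact (heven q).2
    rcases hkey n with h | h <;> rw [hn] at h
    · exact hxv h
    · exact hxw h

lemma goodColl_subset (G : SimpleGraph V) (𝒞 𝒟 : Finset (Finset V)) (h : goodColl G 𝒞)
    (hsub : 𝒟 ⊆ 𝒞) : goodColl G 𝒟 :=
  ⟨h.1.mono (Finset.coe_subset.2 hsub), fun C hC => h.2 C (hsub hC)⟩

lemma rest_le (G : SimpleGraph V) (s : Set V) (Rest : Finset (Finset V))
    (hgood : goodColl G Rest) (hsub : ∀ C ∈ Rest, ∀ x ∈ C, x ∈ s) :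
    ∑ C ∈ Rest, C.card ≤ sigmaNum' (G.induce s) := by
  obtain ⟨𝒞', hgood', hsum⟩ := coll_down G s Rest hgood hsub
  rw [← hsum]
  exact le_sigmaNum' _ _ hgood'

lemma sigma_ge (G : SimpleGraph V) (v w : V) (hadj : G.Adj v w) :
    sigmaNum' (G.induce ({v, w}ᶜ : Set V)) + 2 ≤ sigmaNum' G := by
  have hvw : v ≠ w := G.ne_of_adj hadj
  set s : Set V := {v, w}ᶜ with hs
  have hmem_s : ∀ x : V, x ∈ s ↔ x ≠ v ∧ x ≠ w := by
    intro x; simp [hs, not_or]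
  obtain ⟨𝒞', hgood', hsum'⟩ := exists_optimal (G.induce s)
  obtain ⟨𝒞, hgood, hsub, hsum⟩ := coll_up G s 𝒞' hgood'
  have hvnot : ∀ C ∈ 𝒞, v ∉ C := fun C hC hv => ((hmem_s v).1 (hsub C hC v hv)).1 rfl
  have hwnot : ∀ C ∈ 𝒞, w ∉ C := fun C hC hw => ((hmem_s w).1 (hsub C hC w hw)).2 rfl
  have hnotmem : ({v, w} : Finset V) ∉ 𝒞 := fun h => hvnot _ h (by simp)
  have hgood2 : goodColl G (insert {v, w} 𝒞) := by
    constructor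
    · rw [Finset.coe_insert]
      intro C hC D hD hne
      rcases Set.mem_insert_iff.1 hC with rfl | hC'
      · rcases Set.mem_insert_iff.1 hD with rfl | hD'
        · exact absurd rfl hne
        · rw [Finset.disjoint_left]
          intro a ha ha'
          simp only [Finset.mem_insert, Finset.mem_singleton] at ha
          rcases ha with rfl | rfl
          · exact hvnot D hD' ha'
          · exact hwnot D hD' ha'
      · rcases Set.mem_insert_iff.1 hD with rfl | hD'
        · rw [Finset.disjoint_right]
          intro a ha ha'
          simp only [Finset.mem_insert, Finset.mem_singleton] at ha
          rcases ha with rfl | rfl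
          · exact hvnot C hC' ha'
          · exact hwnot C hC' ha'
        · exact hgood.1 hC' hD' hne
    · intro C hC
      rcases Finset.mem_insert.1 hC with rfl | hC'
      · exact Or.inl ⟨v, w, hadj, rfl⟩
      · exact hgood.2 C hC'
  have hsum2 : ∑ C ∈ insert ({v, w} : Finset V) 𝒞, C.card = 2 + ∑ C ∈ 𝒞, C.card := by
    rw [Finset.sum_insert hnotmem, Finset.card_pair hvw]
  have := le_sigmaNum' G _ hgood2
  rw [hsum2, hsum, hsum'] at this
  omega

lemma sigma_le (G : SimpleGraph V) (v w : V) (hN : ∀ u, G.Adj v u ↔ u = w)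
    (hadj : G.Adj v w) :
    sigmaNum' G ≤ sigmaNum' (G.induce ({v, w}ᶜ : Set V)) + 2 := by
  have hvw : v ≠ w := G.ne_of_adj hadj
  set s : Set V := {v, w}ᶜ with hs
  have hmem_s : ∀ x : V, x ∈ s ↔ x ≠ v ∧ x ≠ w := by
    intro x; simp [hs, not_or]
  obtain ⟨𝒞, hgood, hsum⟩ := exists_optimal G
  by_cases hv : ∃ C₀ ∈ 𝒞, v ∈ C₀
  · -- Case A
    obtain ⟨C₀, hC₀, hvC₀⟩ := hv
    have hC₀eq : C₀ = {v, w} := leaf_piece G v w hN C₀ (hgood.2 C₀ hC₀) hvC₀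
    set Rest := 𝒞.erase C₀ with hRest
    have hsubR : ∀ D ∈ Rest, ∀ x ∈ D, x ∈ s := by
      intro D hD x hx
      have hDne : D ≠ C₀ := Finset.ne_of_mem_erase hD
      have hD𝒞 : D ∈ 𝒞 := Finset.mem_of_mem_erase hD
      have hdis : Disjoint D C₀ := hgood.1 (Finset.mem_coe.2 hD𝒞) (Finset.mem_coe.2 hC₀) hDne
      have hxnot : x ∉ C₀ := Finset.disjoint_left.1 hdis hx
      rw [hC₀eq] at hxnot
      simp only [Finset.mem_insert, Finset.mem_singleton, not_or] at hxnot
      exact (hmem_s x).2 hxnot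
    have hgoodR : goodColl G Rest := goodColl_subset G 𝒞 Rest hgood (Finset.erase_subset _ _)
    have h1 := rest_le G s Rest hgoodR hsubR
    have h2 : C₀.card + ∑ C ∈ Rest, C.card = ∑ C ∈ 𝒞, C.card :=
      Finset.add_sum_erase 𝒞 _ hC₀
    have h3 : C₀.card = 2 := by rw [hC₀eq]; exact Finset.card_pair hvw
    omega
  · push_neg at hv
    by_cases hw : ∃ C₀ ∈ 𝒞, w ∈ C₀
    · obtain ⟨C₀, hC₀, hwC₀⟩ := hw
      set Rest := 𝒞.erase C₀ with hRest
      have hsubR : ∀ D ∈ Rest, ∀ x ∈ D, x ∈ s := by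
        intro D hD x hx
        have hDne : D ≠ C₀ := Finset.ne_of_mem_erase hD
        have hD𝒞 : D ∈ 𝒞 := Finset.mem_of_mem_erase hD
        have hdis : Disjoint D C₀ := hgood.1 (Finset.mem_coe.2 hD𝒞) (Finset.mem_coe.2 hC₀) hDne
        refine (hmem_s x).2 ⟨fun h => hv D hD𝒞 (h ▸ hx), fun h => ?_⟩
        exact Finset.disjoint_left.1 hdis hx (h ▸ hwC₀)
      have hgoodR : goodColl G Rest := goodColl_subset G 𝒞 Rest hgood (Finset.erase_subset _ _)
      have h2 : C₀.card + ∑ C ∈ Rest, C.card = ∑ C ∈ 𝒞, C.card :=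
        Finset.add_sum_erase 𝒞 _ hC₀
      rcases hgood.2 C₀ hC₀ with ⟨u, u', huu', hC₀eq⟩ | ⟨hcard, π, hcyc, hadjC⟩
      · -- B1: edge
        have h1 := rest_le G s Rest hgoodR hsubR
        have h3 : C₀.card = 2 := by
          rw [hC₀eq]; exact Finset.card_pair (G.ne_of_adj huu')
        omega
      · -- B2: cycle
        set n := C₀.card with hn
        have hncard3 : 3 ≤ n := hcard
        set m := (n - 1) / 2 with hm
        have h2m : 2 * m ≤ n - 1 := by omega
        have hπmem : ∀ k : ℕ, (π ^ k) w ∈ C₀ :=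
          fun k => pow_mem_of_mem C₀ π (fun x hx => hcyc.1.mapsTo hx) k w hwC₀
        have hinj : ∀ a b : ℕ, a < n → b < n → (π ^ a) w = (π ^ b) w → a = b := by
          intro a b ha hb hab
          have hmod := (hcyc.pow_apply_eq_pow_apply hwC₀).1 hab
          have h1 : a % C₀.card = b % C₀.card := hmod
          rw [← hn] at h1
          have h1a : a % n = a := Nat.mod_eq_of_lt ha
          have h1b : b % n = b := Nat.mod_eq_of_lt hb
          omega
        have hPadj : ∀ i : ℕ, G.Adj ((π ^ (2*i+1)) w) ((π ^ (2*i+2)) w) := by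
          intro i
          have h := hadjC _ (hπmem (2*i+1))
          have heq : (π ^ (2*i+1+1)) w = π ((π ^ (2*i+1)) w) := by
            rw [pow_succ' π (2*i+1)]
            rfl
          rw [← heq, show 2*i+1+1 = 2*i+2 from by ring] at h
          exact h
        set P : ℕ → Finset V := fun i => {(π ^ (2*i+1)) w, (π ^ (2*i+2)) w} with hP
        have hPcard : ∀ i < m, (P i).card = 2 := by
          intro i hi
          apply Finset.card_pair
          intro h
          have := hinj (2*i+1) (2*i+2) (by omega) (by omega) h
          omega
        have hPsub : ∀ i, ∀ x ∈ P i, x ∈ C₀ := by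
          intro i x hx
          simp only [hP, Finset.mem_insert, Finset.mem_singleton] at hx
          rcases hx with rfl | rfl <;> exact hπmem _
        have hPnotw : ∀ i < m, ∀ x ∈ P i, x ≠ w := by
          intro i hi x hx h
          simp only [hP, Finset.mem_insert, Finset.mem_singleton] at hx
          rcases hx with h' | h' <;> rw [h'] at h
          · have := hinj (2*i+1) 0 (by omega) (by omega) (by simpa using h)
            omega
          · have := hinj (2*i+2) 0 (by omega) (by omega) (by simpa using h)
            omega
        have hPnotv : ∀ i, ∀ x ∈ P i, x ≠ v := by
          intro i x hx h
          exact hv C₀ hC₀ (h ▸ hPsub i x hx)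
        have hPdisj : ∀ i < m, ∀ j, j < m → i ≠ j → Disjoint (P i) (P j) := by
          intro i hi j hj hij
          rw [Finset.disjoint_left]
          intro x hx hx'
          simp only [hP, Finset.mem_insert, Finset.mem_singleton] at hx hx'
          rcases hx with rfl | rfl <;> rcases hx' with h | h <;>
            (first
              | (have := hinj (2*i+1) (2*j+1) (by omega) (by omega) h; omega)
              | (have := hinj (2*i+1) (2*j+2) (by omega) (by omega) h; omega)
              | (have := hinj (2*i+2) (2*j+1) (by omega) (by omega) h; omega)
              | (have := hinj (2*i+2) (2*j+2) (by omega) (by omega) h; omega))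
        set Ps := (Finset.range m).image P with hPs
        have hinjP : ∀ i ∈ Finset.range m, ∀ j ∈ Finset.range m, P i = P j → i = j := by
          intro i hi j hj h
          by_contra hij
          have hd := hPdisj i (Finset.mem_range.1 hi) j (Finset.mem_range.1 hj) hij
          rw [h, disjoint_self] at hd
          have := hPcard j (Finset.mem_range.1 hj)
          rw [hd] at this
          simp at this
        have hsumPs : ∑ C ∈ Ps, C.card = 2 * m := by
          rw [hPs, Finset.sum_image hinjP,
            Finset.sum_congr rfl (fun i hi => hPcard i (Finset.mem_range.1 hi))]
          simp [mul_comm]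
        have hmemPs : ∀ Q ∈ Ps, ∃ i < m, Q = P i := by
          intro Q hQ
          simp only [hPs, Finset.mem_image, Finset.mem_range] at hQ
          obtain ⟨i, hi, rfl⟩ := hQ
          exact ⟨i, hi, rfl⟩
        have hRdisC₀ : ∀ D ∈ Rest, Disjoint D C₀ := by
          intro D hD
          exact hgood.1 (Finset.mem_coe.2 (Finset.mem_of_mem_erase hD))
            (Finset.mem_coe.2 hC₀) (Finset.ne_of_mem_erase hD)
        have hRP : Disjoint Rest Ps := by
          rw [Finset.disjoint_right]
          intro Q hQPs hQR
          obtain ⟨i, hi, rfl⟩ := hmemPs Q hQPs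
          have hdis := hRdisC₀ _ hQR
          have hx : (π ^ (2*i+1)) w ∈ P i := by
            simp [hP]
          exact Finset.disjoint_left.1 hdis hx (hPsub i _ hx)
        set New := Rest ∪ Ps with hNew
        have hgoodNew : goodColl G New := by
          constructor
          · rw [hNew, Finset.coe_union]
            intro C hC D hD hne
            rcases (Set.mem_union _ _ _).1 hC with hC' | hC' <;>
              rcases (Set.mem_union _ _ _).1 hD with hD' | hD'
            · exact hgoodR.1 hC' hD' hne
            · obtain ⟨i, hi, rfl⟩ := hmemPs D hD'
              exact Finset.disjoint_of_subset_right (fun x hx => hPsub i x hx)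
                (hRdisC₀ C hC')
            · obtain ⟨i, hi, rfl⟩ := hmemPs C hC'
              exact (Finset.disjoint_of_subset_right (fun x hx => hPsub i x hx)
                (hRdisC₀ D hD')).symm
            · obtain ⟨i, hi, rfl⟩ := hmemPs C hC'
              obtain ⟨j, hj, rfl⟩ := hmemPs D hD'
              exact hPdisj i hi j hj (fun h => hne (by rw [h]))
          · intro C hC
            rcases Finset.mem_union.1 hC with hC' | hC'
            · exact hgoodR.2 C hC'
            · obtain ⟨i, hi, rfl⟩ := hmemPs C hC'
              exact Or.inl ⟨_, _, hPadj i, rfl⟩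
        have hsubNew : ∀ C ∈ New, ∀ x ∈ C, x ∈ s := by
          intro C hC x hx
          rcases Finset.mem_union.1 hC with hC' | hC'
          · exact hsubR C hC' x hx
          · obtain ⟨i, hi, rfl⟩ := hmemPs C hC'
            exact (hmem_s x).2 ⟨hPnotv i x hx, hPnotw i hi x hx⟩
        have h1 := rest_le G s New hgoodNew hsubNew
        rw [hNew, Finset.sum_union hRP, hsumPs] at h1
        omega
    · -- Case C
      push_neg at hw
      have hsubR : ∀ D ∈ 𝒞, ∀ x ∈ D, x ∈ s := by
        intro D hD x hx
        exact (hmem_s x).2 ⟨fun h => hv D hD (h ▸ hx), fun h => hw D hD (h ▸ hx)⟩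
      have h1 := rest_le G s 𝒞 hgood hsubR
      omega

lemma sigmaNum_eq_sigmaNum' (G : SimpleGraph V) : sigmaNum G = sigmaNum' G := by
  unfold sigmaNum sigmaNum' goodColl
  congr 1
  ext k
  constructor
  · rintro ⟨𝒞, h1, h2, h3⟩; exact ⟨𝒞, ⟨h1, h2⟩, h3⟩
  · rintro ⟨𝒞, ⟨h1, h2⟩, h3⟩; exact ⟨𝒞, h1, h2, h3⟩

end Aux3

/-- Removing a leaf `v` together with its unique neighbour `w` decreases the rank of
the real adjacency matrix by exactly 2, and decreases `σ` by exactly 2. -/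
theorem leaf_removal_rank_sigma {V : Type*} [Fintype V] [DecidableEq V]
    (G : SimpleGraph V) (v w : V) (hdeg : G.degree v = 1) (hadj : G.Adj v w) :
    ((G.induce ({v, w}ᶜ : Set V)).adjMatrix ℝ).rank + 2 = (G.adjMatrix ℝ).rank ∧
    sigmaNum (G.induce ({v, w}ᶜ : Set V)) + 2 = sigmaNum G := by
  constructor
  · exact rank_leaf G v w hdeg hadj
  · have hN := adj_leaf_iff G v w hdeg hadj
    have h1 := sigma_ge G v w hadj
    have h2 := sigma_le G v w hN hadj
    rw [sigmaNum_eq_sigmaNum', sigmaNum_eq_sigmaNum']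
    omega
end

section
/- Let G be a finite simple bipartite graph with parts V₁, V₂, let v be a vertex of G of degree 1 with unique neighbour w, and let G′ = G − {v, w} be the induced bipartite subgraph obtained by deleting v and w. Then rank B(G′) = rank B(G) − 1, where B denotes the real biadjacency matrix and rank is over ℝ. -/
open scoped Classical
open Finset

lemma rank_aux {m n : Type*} [Fintype m] [Fintype n] [DecidableEq n]
    (M : Matrix m n ℝ) (p : m → Prop) (q : n → Prop) [DecidablePred p] [DecidablePred q]
    (i₀ : m) (j₀ : n) (hp : ∀ i, p i ↔ i ≠ i₀) (hq : ∀ j, q j ↔ j ≠ j₀)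
    (h1 : M i₀ j₀ = 1) (h0 : ∀ j, j ≠ j₀ → M i₀ j = 0) :
    (Matrix.of fun (i : {i // p i}) (j : {j // q j}) => M i.1 j.1).rank + 1 = M.rank := by
  classical
  set M' : Matrix {i // p i} {j // q j} ℝ :=
    Matrix.of fun (i : {i // p i}) (j : {j // q j}) => M i.1 j.1 with hM'
  -- key summation lemma
  have hqj₀ : ¬ q j₀ := fun h => (hq j₀).1 h rfl
  have sum_key : ∀ (i : m) (x : n → ℝ), x j₀ = 0 →
      ∑ j : {j // q j}, M i j.1 * x j.1 = ∑ j, M i j * x j := by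
    intro i x hx
    have e1 : ∑ j ∈ Finset.univ.filter q, M i j * x j = ∑ j : {j // q j}, M i j.1 * x j.1 :=
      Finset.sum_subtype _ (by simp) _
    have e2 : Finset.univ.filter q = Finset.univ.erase j₀ := by
      ext j; simp [hq j, Finset.mem_erase]
    have e3 : ∑ j ∈ Finset.univ.erase j₀, M i j * x j = ∑ j, M i j * x j :=
      Finset.sum_erase _ (by simp [hx])
    rw [← e1, e2, e3]
  -- extension-by-zero linear map
  let E : ({j // q j} → ℝ) →ₗ[ℝ] (n → ℝ) :=
    { toFun := fun y j => if h : q j then y ⟨j, h⟩ else 0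
      map_add' := by intro y z; funext j; by_cases h : q j <;> simp [h]
      map_smul' := by intro c y; funext j; by_cases h : q j <;> simp [h] }
  have hE_inj : Function.Injective E := by
    intro y z h
    funext j
    have := congrFun h j.1
    simpa [E, j.2] using this
  have hEval : ∀ (y : {j // q j} → ℝ) (j : {j // q j}), E y j.1 = y j := by
    intro y j; simp [E, j.2]
  have hEj₀ : ∀ (y : {j // q j} → ℝ), E y j₀ = 0 := by
    intro y; simp [E, hqj₀]
  -- kernel membership characterizations
  have mem_kerM : ∀ x : n → ℝ, x ∈ LinearMap.ker M.mulVecLin ↔ ∀ i, ∑ j, M i j * x j = 0 := by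
    intro x
    simp only [LinearMap.mem_ker, Matrix.mulVecLin_apply, funext_iff, Matrix.mulVec,
      dotProduct, Pi.zero_apply]
  have mem_kerM' : ∀ y : {j // q j} → ℝ,
      y ∈ LinearMap.ker M'.mulVecLin ↔ ∀ i : {i // p i}, ∑ j : {j // q j}, M i.1 j.1 * y j = 0 := by
    intro y
    simp only [LinearMap.mem_ker, Matrix.mulVecLin_apply, funext_iff, Matrix.mulVec,
      dotProduct, Pi.zero_apply, hM', Matrix.of_apply]
  -- image of kernel
  have himg : (LinearMap.ker M'.mulVecLin).map E = LinearMap.ker M.mulVecLin := by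
    apply le_antisymm
    · rintro x ⟨y, hy, rfl⟩
      rw [mem_kerM]
      intro i
      rw [← sum_key i (E y) (hEj₀ y)]
      have : ∑ j : {j // q j}, M i j.1 * E y j.1 = ∑ j : {j // q j}, M i j.1 * y j := by
        refine Finset.sum_congr rfl fun j _ => by rw [hEval]
      rw [this]
      by_cases hi : p i
      · exact (mem_kerM' y).1 hy ⟨i, hi⟩
      · have : i = i₀ := by by_contra h; exact hi ((hp i).2 h)
        subst this
        refine Finset.sum_eq_zero fun j _ => ?_
        rw [h0 j.1 ((hq j.1).1 j.2), zero_mul]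
    · intro x hx
      have hx' := (mem_kerM x).1 hx
      have hxj₀ : x j₀ = 0 := by
        have := hx' i₀
        rwa [Finset.sum_eq_single j₀ (fun j _ hj => by rw [h0 j hj, zero_mul])
          (fun h => absurd (Finset.mem_univ j₀) h), h1, one_mul] at this
      refine ⟨fun j => x j.1, ?_, ?_⟩
      · show (fun j : {j // q j} => x j.1) ∈ LinearMap.ker M'.mulVecLin
        rw [mem_kerM']
        intro i
        rw [sum_key i.1 x hxj₀]
        exact hx' i.1
      · funext j
        by_cases h : q j
        · simp [E, h]
        · have : j = j₀ := by by_contra hj; exact h ((hq j).2 hj)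
          subst this
          simp [E, hqj₀, hxj₀.symm]
  -- equal kernel dimensions
  have e : LinearMap.ker M'.mulVecLin ≃ₗ[ℝ] LinearMap.ker M.mulVecLin := by
    rw [← himg]
    exact Submodule.equivMapOfInjective E hE_inj _
  have hker : Module.finrank ℝ (LinearMap.ker M'.mulVecLin)
      = Module.finrank ℝ (LinearMap.ker M.mulVecLin) := e.finrank_eq
  -- rank-nullity
  have rn : M.rank + Module.finrank ℝ (LinearMap.ker M.mulVecLin) = Fintype.card n := by
    rw [Matrix.rank]
    rw [LinearMap.finrank_range_add_finrank_ker M.mulVecLin]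
    exact Module.finrank_fintype_fun_eq_card ℝ
  have rn' : M'.rank + Module.finrank ℝ (LinearMap.ker M'.mulVecLin)
      = Fintype.card {j // q j} := by
    rw [Matrix.rank]
    rw [LinearMap.finrank_range_add_finrank_ker M'.mulVecLin]
    exact Module.finrank_fintype_fun_eq_card ℝ
  have hcard : Fintype.card {j // q j} + 1 = Fintype.card n := by
    have e2 : {j // q j} ≃ {j // j ≠ j₀} := Equiv.subtypeEquivRight hq
    rw [Fintype.card_congr e2]
    have := Fintype.card_subtype_compl (fun j => j = j₀) (α := n)
    rw [Fintype.card_subtype_eq j₀] at this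
    have hpos : 1 ≤ Fintype.card n := Fintype.card_pos_iff.2 ⟨j₀⟩
    simp only [ne_eq]
    omega
  rw [hker] at rn'
  omega

set_option maxHeartbeats 1000000 in
/-- Removing a leaf `v` of a bipartite graph together with its unique neighbour `w`
(one vertex from each part) decreases the rank of the real biadjacency matrix by
exactly 1. -/
theorem bipartite_leaf_removal_rank {α β : Type*} [Fintype α] [Fintype β]
    [DecidableEq α] [DecidableEq β] (G : SimpleGraph (α ⊕ β))
    (hbip₁ : ∀ a a' : α, ¬G.Adj (Sum.inl a) (Sum.inl a'))
    (hbip₂ : ∀ b b' : β, ¬G.Adj (Sum.inr b) (Sum.inr b'))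
    (v w : α ⊕ β) (hdeg : G.degree v = 1) (hadj : G.Adj v w) :
    (Matrix.of fun (a : {a : α // (Sum.inl a : α ⊕ β) ≠ v ∧ (Sum.inl a : α ⊕ β) ≠ w})
        (b : {b : β // (Sum.inr b : α ⊕ β) ≠ v ∧ (Sum.inr b : α ⊕ β) ≠ w}) =>
        if G.Adj (Sum.inl a.1) (Sum.inr b.1) then (1 : ℝ) else 0).rank + 1 =
      (Matrix.of fun (a : α) (b : β) =>
        if G.Adj (Sum.inl a) (Sum.inr b) then (1 : ℝ) else 0).rank := by
  classical
  -- uniqueness of the neighbour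
  have huniq : ∀ u, G.Adj v u → u = w := by
    intro u hu
    obtain ⟨z, hz⟩ := Finset.card_eq_one.mp hdeg
    have hw : w ∈ G.neighborFinset v := (SimpleGraph.mem_neighborFinset _ _ _).2 hadj
    have hu' : u ∈ G.neighborFinset v := (SimpleGraph.mem_neighborFinset _ _ _).2 hu
    rw [hz, Finset.mem_singleton] at hw hu'
    rw [hu', hw]
  obtain ⟨a₀, rfl⟩ | ⟨b₀, rfl⟩ : (∃ a, v = Sum.inl a) ∨ (∃ b, v = Sum.inr b) := by
    cases v with
    | inl a => exact Or.inl ⟨a, rfl⟩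
    | inr b => exact Or.inr ⟨b, rfl⟩
  · -- v = inl a₀; then w must be inr b₀
    obtain ⟨b₀, rfl⟩ : ∃ b, w = Sum.inr b := by
      cases w with
      | inl a' => exact absurd hadj (hbip₁ a₀ a')
      | inr b => exact ⟨b, rfl⟩
    have key := rank_aux
      (Matrix.of fun (a : α) (b : β) =>
        if G.Adj (Sum.inl a) (Sum.inr b) then (1 : ℝ) else 0)
      (fun a : α => (Sum.inl a : α ⊕ β) ≠ Sum.inl a₀ ∧ (Sum.inl a : α ⊕ β) ≠ Sum.inr b₀)
      (fun b : β => (Sum.inr b : α ⊕ β) ≠ Sum.inl a₀ ∧ (Sum.inr b : α ⊕ β) ≠ Sum.inr b₀)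
      a₀ b₀ (by simp) (by simp)
      (by simp [hadj])
      (fun b hb => by
        simp only [Matrix.of_apply, ite_eq_right_iff]
        intro h
        exact absurd (Sum.inr.inj (huniq _ h)) hb)
    exact key
  · -- v = inr b₀; then w must be inl a₀
    obtain ⟨a₀, rfl⟩ : ∃ a, w = Sum.inl a := by
      cases w with
      | inl a => exact ⟨a, rfl⟩
      | inr b' => exact absurd hadj (hbip₂ b₀ b')
    have key := rank_aux
      (Matrix.transpose (Matrix.of fun (a : α) (b : β) =>
        if G.Adj (Sum.inl a) (Sum.inr b) then (1 : ℝ) else 0))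
      (fun b : β => (Sum.inr b : α ⊕ β) ≠ Sum.inr b₀ ∧ (Sum.inr b : α ⊕ β) ≠ Sum.inl a₀)
      (fun a : α => (Sum.inl a : α ⊕ β) ≠ Sum.inr b₀ ∧ (Sum.inl a : α ⊕ β) ≠ Sum.inl a₀)
      b₀ a₀ (by simp) (by simp)
      (by simp [Matrix.transpose_apply, hadj.symm])
      (fun a ha => by
        simp only [Matrix.transpose_apply, Matrix.of_apply, ite_eq_right_iff]
        intro h
        exact absurd (Sum.inl.inj (huniq _ h.symm)) ha)
    rw [Matrix.rank_transpose] at key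
    rw [← key]
    congr 1
    exact (Matrix.rank_transpose _).symm
end

section
/- Let A ∈ ℝ^{n×n} and v ∈ ℝ^n. Then v can be written as a finite sum of vectors w, each of which is minimal with respect to A and satisfies supp(Aw) ⊆ supp(Av). -/
open Finset

/-- `w` is minimal with respect to `A`: no nonzero vector `u` whose support is
strictly contained in the support of `w` satisfies `supp(Au) ⊆ supp(Aw)`. -/
def IsMinimalVec {n : ℕ} (A : Matrix (Fin n) (Fin n) ℝ) (w : Fin n → ℝ) : Prop :=
  ∀ u : Fin n → ℝ, u ≠ 0 → Function.support u ⊂ Function.support w →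
    ¬Function.support (A.mulVec u) ⊆ Function.support (A.mulVec w)

/-- Every vector can be written as a finite sum of minimal vectors `w` with
`supp(Aw) ⊆ supp(Av)`. -/
theorem minimal_decomposition {n : ℕ} (A : Matrix (Fin n) (Fin n) ℝ) (v : Fin n → ℝ) :
    ∃ L : List (Fin n → ℝ), L.sum = v ∧
      ∀ w ∈ L, IsMinimalVec A w ∧
        Function.support (A.mulVec w) ⊆ Function.support (A.mulVec v) := by
  suffices h : ∀ k : ℕ, ∀ v : Fin n → ℝ,
      (Finset.univ.filter (fun i => v i ≠ 0)).card ≤ k →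
      ∃ L : List (Fin n → ℝ), L.sum = v ∧
        ∀ w ∈ L, IsMinimalVec A w ∧
          Function.support (A.mulVec w) ⊆ Function.support (A.mulVec v) by
    exact h _ v le_rfl
  intro k
  induction k using Nat.strong_induction_on with
  | _ k ih =>
  intro v hcard
  by_cases hv0 : v = 0
  · exact ⟨[], by simp [hv0], by simp⟩
  by_cases hmin : IsMinimalVec A v
  · exact ⟨[v], by simp, by simp [hmin]⟩
  · simp only [IsMinimalVec, not_forall, not_not] at hmin
    obtain ⟨u, hu0, hss, hAuAv⟩ := hmin
    obtain ⟨i, hi0⟩ := Function.ne_iff.mp hu0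
    have hi : u i ≠ 0 := hi0
    have hiu : i ∈ Function.support u := hi
    have hvi : v i ≠ 0 := hss.subset hiu
    set c : ℝ := v i / u i with hc
    have hcne : c ≠ 0 := div_ne_zero hvi hi
    set v' : Fin n → ℝ := v - c • u with hv'
    -- support of v' is strictly smaller than that of v
    have hsubv : (Finset.univ.filter (fun j => v' j ≠ 0)) ⊂
        (Finset.univ.filter (fun j => v j ≠ 0)) := by
      constructor
      · intro j hj
        simp only [mem_filter, mem_univ, true_and] at hj ⊢
        by_contra hvj
        apply hj
        have huj : u j = 0 := by
          by_contra huj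
          exact (hss.subset huj) hvj
        simp [hv', hvj, huj]
      · intro hle
        have : i ∈ Finset.univ.filter (fun j => v j ≠ 0) := by
          simp [hvi]
        have := hle this
        simp only [mem_filter, mem_univ, true_and] at this
        apply this
        simp only [hv', hc, Pi.sub_apply, Pi.smul_apply, smul_eq_mul]
        field_simp
        ring
    have hsubu : (Finset.univ.filter (fun j => (c • u) j ≠ 0)) ⊂
        (Finset.univ.filter (fun j => v j ≠ 0)) := by
      have hsuppcu : ∀ j, (c • u) j ≠ 0 ↔ u j ≠ 0 := by
        intro j
        simp [smul_ne_zero_iff, hcne]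
      constructor
      · intro j hj
        simp only [mem_filter, mem_univ, true_and, hsuppcu] at hj ⊢
        exact hss.subset hj
      · intro hle
        obtain ⟨j, hjv, hju⟩ := Set.exists_of_ssubset hss
        have : j ∈ Finset.univ.filter (fun l => v l ≠ 0) := by
          simp only [mem_filter, mem_univ, true_and]; exact hjv
        have := hle this
        simp only [mem_filter, mem_univ, true_and, hsuppcu] at this
        exact this (by simpa using hju)
    have hcardv : (Finset.univ.filter (fun j => v' j ≠ 0)).card < k :=
      lt_of_lt_of_le (Finset.card_lt_card hsubv) hcard
    have hcardu : (Finset.univ.filter (fun j => (c • u) j ≠ 0)).card < k :=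
      lt_of_lt_of_le (Finset.card_lt_card hsubu) hcard
    obtain ⟨L1, hL1sum, hL1⟩ := ih _ hcardv v' le_rfl
    obtain ⟨L2, hL2sum, hL2⟩ := ih _ hcardu (c • u) le_rfl
    refine ⟨L1 ++ L2, ?_, ?_⟩
    · simp [hL1sum, hL2sum, hv']
    · have hAu : Function.support (A.mulVec (c • u)) ⊆
          Function.support (A.mulVec v) := by
        rw [Matrix.mulVec_smul]
        intro j hj
        apply hAuAv
        simp only [Function.mem_support, Pi.smul_apply, smul_eq_mul] at hj ⊢
        intro h0
        exact hj (by simp [h0])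
      have hAv' : Function.support (A.mulVec v') ⊆
          Function.support (A.mulVec v) := by
        intro j hj
        simp only [hv', Matrix.mulVec_sub, Function.mem_support, Pi.sub_apply] at hj ⊢
        intro h0
        apply hj
        rw [h0]
        have : A.mulVec (c • u) j = 0 := by
          by_contra hne
          exact (by simpa using hAu hne : A.mulVec v j ≠ 0) h0
        simpa using this
      intro w hw
      rcases List.mem_append.mp hw with h | h
      · obtain ⟨h1, h2⟩ := hL1 w h
        exact ⟨h1, h2.trans hAv'⟩
      · obtain ⟨h1, h2⟩ := hL2 w h
        exact ⟨h1, h2.trans hAu⟩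
end

section
/- Let A ∈ ℝ^{n×n}, let S ⊆ {1,…,n} be the union of the supports of all kernel vectors of A, let P ∈ ℝ^{n×n} be the diagonal matrix with P_{ii} = 1 for i ∉ S and P_{ii} = 0 for i ∈ S, and suppose B ∈ ℝ^{n×n} satisfies AB = P. Let x, y ∈ ℝ^n and c ∈ ℝ, and let A′ ∈ ℝ^{(n+1)×(n+1)} be the block matrix with A in the top-left n×n block, x as the last column's first n entries, yᵀ as the last row's first n entries, and c in the bottom-right entry. If x_i = 0 for all i ∈ S and yᵀBx ≠ c, then rank A′ ≥ rank A + 1, where rank is over ℝ. -/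
open scoped Classical
open Finset

/-- The union of the supports of all kernel vectors of `A`. -/
def kerSupport {n : ℕ} (A : Matrix (Fin n) (Fin n) ℝ) : Set (Fin n) :=
  {i | ∃ v : Fin n → ℝ, A.mulVec v = 0 ∧ v i ≠ 0}

/-- The projection onto the coordinates outside the support of the kernel of `A`. -/
noncomputable def kerProj {n : ℕ} (A : Matrix (Fin n) (Fin n) ℝ) :
    Matrix (Fin n) (Fin n) ℝ :=
  Matrix.of fun i j => if i = j ∧ i ∉ kerSupport A then 1 else 0

/-- The matrix `A` bordered by a new column `x`, a new row `y`, and corner entry `c`. -/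
noncomputable def borderMatrix {n : ℕ} (A : Matrix (Fin n) (Fin n) ℝ)
    (x y : Fin n → ℝ) (c : ℝ) : Matrix (Option (Fin n)) (Option (Fin n)) ℝ :=
  Matrix.of fun i j =>
    match i, j with
    | some a, some b => A a b
    | some a, none => x a
    | none, some b => y b
    | none, none => c

/-- If `AB = P`, `x` vanishes on the kernel support of `A`, and `yᵀBx ≠ c`, then
bordering `A` with column `x`, row `y` and corner `c` increases the rank. -/
theorem border_rank_increase {n : ℕ} (A B : Matrix (Fin n) (Fin n) ℝ)
    (hB : A * B = kerProj A) (x y : Fin n → ℝ) (c : ℝ)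
    (hx : ∀ i ∈ kerSupport A, x i = 0)
    (hyx : dotProduct y (B.mulVec x) ≠ c) :
    A.rank + 1 ≤ (borderMatrix A x y c).rank := by
  classical
  set A' := borderMatrix A x y c with hA'
  set L := A'.mulVecLin with hLdef
  set π : (Option (Fin n) → ℝ) →ₗ[ℝ] (Fin n → ℝ) := LinearMap.funLeft ℝ ℝ some with hπ
  set π' := π.domRestrict (LinearMap.range L) with hπ'
  -- P x = x
  have hPx : (kerProj A).mulVec x = x := by
    funext i
    simp only [kerProj, Matrix.mulVec, dotProduct, Matrix.of_apply]
    rw [Finset.sum_eq_single i]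
    · by_cases h : i ∈ kerSupport A
      · simp [h, hx i h]
      · simp [h]
    · intro b _ hb
      simp [Ne.symm hb]
    · simp
  have hABx : A.mulVec (B.mulVec x) = x := by
    rw [Matrix.mulVec_mulVec, hB, hPx]
  -- mulVec formula for the bordered matrix
  have hmul : ∀ v : Option (Fin n) → ℝ,
      (A'.mulVec v = fun o => Option.elim o
        (dotProduct y (fun j => v (some j)) + c * v none)
        (fun i => (A.mulVec (fun j => v (some j))) i + x i * v none)) := by
    intro v
    funext o
    cases o with
    | none =>
      simp only [Matrix.mulVec, dotProduct, hA', borderMatrix, Matrix.of_apply,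
        Fintype.sum_option, Option.elim]
      ring_nf
    | some i =>
      simp only [Matrix.mulVec, dotProduct, hA', borderMatrix, Matrix.of_apply,
        Fintype.sum_option, Option.elim]
      rw [add_comm]
  -- range of A restricted projection
  have key := LinearMap.finrank_range_add_finrank_ker π'
  have h1 : A.rank ≤ Module.finrank ℝ (LinearMap.range π') := by
    have hle : LinearMap.range A.mulVecLin ≤ LinearMap.range π' := by
      rintro w ⟨u, rfl⟩
      refine ⟨⟨L (fun o => Option.elim o 0 u), ⟨_, rfl⟩⟩, ?_⟩
      simp only [hπ', LinearMap.domRestrict_apply, hπ, LinearMap.funLeft_apply]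
      funext i
      simp only [hLdef, Matrix.mulVecLin_apply, hmul]
      simp [Option.elim]
    exact Submodule.finrank_mono hle
  have h2 : 1 ≤ Module.finrank ℝ (LinearMap.ker π') := by
    rw [Nat.one_le_iff_ne_zero]
    have : Nontrivial (LinearMap.ker π') := by
      set v0 : Option (Fin n) → ℝ := fun o => Option.elim o (-1) (B.mulVec x) with hv0
      have hLv0 : L v0 = fun o => Option.elim o (dotProduct y (B.mulVec x) - c) 0 := by
        simp only [hLdef, Matrix.mulVecLin_apply, hmul]
        funext o
        cases o with
        | none => simp [hv0, Option.elim]; ring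
        | some i =>
          have : (fun j => v0 (some j)) = B.mulVec x := rfl
          simp only [Option.elim, this, hABx, hv0, Pi.zero_apply]
          ring
      refine nontrivial_of_ne ⟨⟨L v0, ⟨v0, rfl⟩⟩, ?_⟩ 0 ?_
      · simp only [hπ', LinearMap.mem_ker, LinearMap.domRestrict_apply, hπ,
          LinearMap.funLeft_apply]
        funext i
        simp [hLv0, Option.elim]
      · intro h
        have h0 : L v0 = 0 := by
          have := congrArg (fun z => (z : LinearMap.ker π').1.1) h
          simpa using this
        have := congrFun h0 none
        rw [hLv0] at this
        simp only [Option.elim, Pi.zero_apply] at this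
        exact hyx (by linarith)
    exact (Module.finrank_pos (R := ℝ) (M := LinearMap.ker π')).ne'
  have hrank : A'.rank = Module.finrank ℝ (LinearMap.range L) := rfl
  omega
end
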